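/- Let p ∈ (1,∞) and let T : E → F be a quasi p-nuclear operator between Banach spaces, i.e., there exists (x_n*) ∈ ℓ_p(E*) with ‖T(x)‖ ≤ (∑|x_n*(x)|^p)^{1/p} for all x ∈ E. Then T is a compact operator. -/

import Mathlib

/-- Every quasi `p`-nuclear operator between Banach spaces is compact. -/
theorem stmt16 {E F : Type*} [NormedAddCommGroup E] [NormedSpace ℂ E] [CompleteSpace E]
    [NormedAddCommGroup F] [NormedSpace ℂ F] [CompleteSpace F]
    {p : ℝ} (hp : 1 < p) (T : E →L[ℂ] F)
    (x : ℕ → StrongDual ℂ E) (hx : Summable fun n => ‖x n‖ ^ p)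
    (hT : ∀ e : E, ‖T e‖ ≤ (∑' n, ‖x n e‖ ^ p) ^ (1 / p)) :
    IsCompactOperator T := by
  have hp0 : (0:ℝ) < p := lt_trans one_pos hp
  -- coordinatewise summability
  have hsum : ∀ u : E, Summable fun n => ‖x n u‖ ^ p := by
    intro u
    refine Summable.of_nonneg_of_le (fun n => Real.rpow_nonneg (norm_nonneg _) _)
      (fun n => ?_) (hx.mul_right (‖u‖ ^ p))
    calc ‖x n u‖ ^ p ≤ (‖x n‖ * ‖u‖) ^ p :=
          Real.rpow_le_rpow (norm_nonneg _) ((x n).le_opNorm u) hp0.le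
      _ = ‖x n‖ ^ p * ‖u‖ ^ p := Real.mul_rpow (norm_nonneg _) (norm_nonneg _)
  have htb : TotallyBounded (T '' Metric.closedBall 0 1) := by
    rw [Metric.totallyBounded_iff]
    intro ε hε
    have hε8 : (0:ℝ) < (ε/8) ^ p := Real.rpow_pos_of_pos (by positivity) _
    obtain ⟨N, hN⟩ : ∃ N, ∑' n, ‖x (n + N)‖ ^ p < (ε/8) ^ p := by
      have h := tendsto_sum_nat_add (fun n => ‖x n‖ ^ p)
      exact (h.eventually (gt_mem_nhds hε8)).exists
    set δp : ℝ := (ε/4) ^ p / (N + 1) with hδpdef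
    have hδp0 : 0 < δp := by
      apply div_pos (Real.rpow_pos_of_pos (by positivity) _) (by positivity)
    set δ : ℝ := δp ^ (1/p) with hδdef
    have hδ0 : 0 < δ := Real.rpow_pos_of_pos hδp0 _
    have hδpow : δ ^ p = δp := by
      rw [hδdef, ← Real.rpow_mul hδp0.le, one_div, inv_mul_cancel₀ hp0.ne', Real.rpow_one]
    set Φ : E →L[ℂ] (Fin N → ℂ) := ContinuousLinearMap.pi (fun i => x i) with hΦdef
    have hΦtb : TotallyBounded (Φ '' Metric.closedBall 0 1) := by
      refine (isCompact_closedBall (0 : Fin N → ℂ) ‖Φ‖).totallyBounded.subset ?_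
      rintro _ ⟨e, he, rfl⟩
      simp only [Metric.mem_closedBall, dist_zero_right] at he ⊢
      calc ‖Φ e‖ ≤ ‖Φ‖ * ‖e‖ := Φ.le_opNorm e
        _ ≤ ‖Φ‖ * 1 := by
            exact mul_le_mul_of_nonneg_left he (norm_nonneg _)
        _ = ‖Φ‖ := mul_one _
    obtain ⟨t, hts, htf, hcover⟩ :=
      EMetric.totallyBounded_iff'.1 hΦtb (ENNReal.ofReal δ) (by simp [hδ0])
    have hgex : ∀ y : Fin N → ℂ, y ∈ t → ∃ e, e ∈ Metric.closedBall (0:E) 1 ∧ Φ e = y := by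
      intro y hy; rcases hts hy with ⟨e, he, rfl⟩; exact ⟨e, he, rfl⟩
    choose! g hg1 hg2 using hgex
    refine ⟨(fun y => T (g y)) '' t, htf.image _, ?_⟩
    rintro _ ⟨e, he, rfl⟩
    have hΦe : Φ e ∈ Φ '' Metric.closedBall 0 1 := ⟨e, he, rfl⟩
    obtain ⟨y, hy, hdy⟩ : ∃ y ∈ t, edist (Φ e) y < ENNReal.ofReal δ := by
      rcases Set.mem_iUnion₂.1 (hcover hΦe) with ⟨y, hy, hmem⟩
      exact ⟨y, hy, hmem⟩
    have hdy' : dist (Φ e) y < δ := by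
      rw [edist_lt_ofReal] at hdy; exact hdy
    refine Set.mem_iUnion₂.2 ⟨T (g y), ⟨y, hy, rfl⟩, ?_⟩
    rw [Metric.mem_ball, dist_eq_norm, ← map_sub]
    set u : E := e - g y with hudef
    -- bound each of the first N coordinates
    have hcoord : ∀ i : Fin N, ‖x i u‖ ≤ δ := by
      intro i
      have : Φ u = Φ e - y := by rw [hudef, map_sub, hg2 y hy]
      have h1 : ‖x i u‖ = ‖(Φ e - y) i‖ := by
        rw [← this]; rfl
      rw [h1]
      calc ‖(Φ e - y) i‖ ≤ ‖Φ e - y‖ := norm_le_pi_norm _ i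
        _ = dist (Φ e) y := (dist_eq_norm _ _).symm
        _ ≤ δ := hdy'.le
    have hu2 : ‖u‖ ≤ 2 := by
      simp only [Metric.mem_closedBall, dist_zero_right] at he
      have hgy : ‖g y‖ ≤ 1 := by
        have := hg1 y hy
        simpa [Metric.mem_closedBall, dist_zero_right] using this
      calc ‖u‖ ≤ ‖e‖ + ‖g y‖ := norm_sub_le _ _
        _ ≤ 1 + 1 := add_le_add he hgy
        _ = 2 := by norm_num
    -- head bound
    have hhead : ∑ i ∈ Finset.range N, ‖x i u‖ ^ p ≤ (ε/4) ^ p := by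
      calc ∑ i ∈ Finset.range N, ‖x i u‖ ^ p ≤ ∑ _i ∈ Finset.range N, δp := by
            refine Finset.sum_le_sum fun i hi => ?_
            rw [← hδpow]
            exact Real.rpow_le_rpow (norm_nonneg _) (hcoord ⟨i, Finset.mem_range.1 hi⟩) hp0.le
        _ = N * δp := by rw [Finset.sum_const, Finset.card_range, nsmul_eq_mul]
        _ ≤ (N + 1) * δp := by nlinarith [hδp0]
        _ = (ε/4) ^ p := by rw [hδpdef]; field_simp
    -- tail bound
    have htailsum : Summable fun n => ‖x (n + N) u‖ ^ p := (summable_nat_add_iff N).2 (hsum u)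
    have htail : ∑' n, ‖x (n + N) u‖ ^ p ≤ (ε/4) ^ p := by
      have hb : Summable fun n => 2 ^ p * ‖x (n + N)‖ ^ p :=
        ((summable_nat_add_iff N).2 hx).mul_left _
      have h1 : ∑' n, ‖x (n + N) u‖ ^ p ≤ ∑' n, 2 ^ p * ‖x (n + N)‖ ^ p := by
        refine Summable.tsum_le_tsum (fun n => ?_) htailsum hb
        calc ‖x (n + N) u‖ ^ p ≤ (‖x (n + N)‖ * 2) ^ p := by
              refine Real.rpow_le_rpow (norm_nonneg _) ?_ hp0.le
              calc ‖x (n + N) u‖ ≤ ‖x (n + N)‖ * ‖u‖ := (x (n + N)).le_opNorm u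
                _ ≤ ‖x (n + N)‖ * 2 := mul_le_mul_of_nonneg_left hu2 (norm_nonneg _)
          _ = 2 ^ p * ‖x (n + N)‖ ^ p := by
              rw [Real.mul_rpow (norm_nonneg _) (by norm_num), mul_comm]
      have h2 : ∑' n, 2 ^ p * ‖x (n + N)‖ ^ p ≤ 2 ^ p * (ε/8) ^ p := by
        rw [tsum_mul_left]
        exact mul_le_mul_of_nonneg_left hN.le (Real.rpow_nonneg (by norm_num) _)
      have h3 : (2:ℝ) ^ p * (ε/8) ^ p = (ε/4) ^ p := by
        rw [← Real.mul_rpow (by norm_num) (by positivity)]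
        congr 1; ring
      linarith
    -- total bound
    have hsplit : ∑' n, ‖x n u‖ ^ p ≤ 2 * (ε/4) ^ p := by
      have : ∑' n, ‖x n u‖ ^ p
          = ∑ i ∈ Finset.range N, ‖x i u‖ ^ p + ∑' n, ‖x (n + N) u‖ ^ p :=
        (Summable.sum_add_tsum_nat_add N (hsum u)).symm
      rw [this]; linarith
    have h2p : (2:ℝ) ≤ 2 ^ p := by
      calc (2:ℝ) = 2 ^ (1:ℝ) := (Real.rpow_one 2).symm
        _ ≤ 2 ^ p := Real.rpow_le_rpow_of_exponent_le (by norm_num) hp.le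
    have hfinal : ∑' n, ‖x n u‖ ^ p ≤ (ε/2) ^ p := by
      have heq : (ε/2) ^ p = 2 ^ p * (ε/4) ^ p := by
        rw [← Real.mul_rpow (by norm_num) (by positivity)]
        congr 1; ring
      have : (2:ℝ) * (ε/4) ^ p ≤ 2 ^ p * (ε/4) ^ p :=
        mul_le_mul_of_nonneg_right h2p (Real.rpow_nonneg (by positivity) _)
      rw [heq]; linarith
    calc ‖T u‖ ≤ (∑' n, ‖x n u‖ ^ p) ^ (1/p) := hT u
      _ ≤ ((ε/2) ^ p) ^ (1/p) := by
          refine Real.rpow_le_rpow ?_ hfinal (by positivity)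
          exact tsum_nonneg fun n => Real.rpow_nonneg (norm_nonneg _) _
      _ = ε/2 := by
          rw [← Real.rpow_mul (by positivity), mul_one_div, div_self hp0.ne', Real.rpow_one]
      _ < ε := by linarith
  -- conclude
  refine ⟨closure (T '' Metric.closedBall 0 1), ?_, ?_⟩
  · rw [isCompact_iff_totallyBounded_isComplete]
    exact ⟨htb.closure, isClosed_closure.isComplete⟩
  · refine Filter.mem_of_superset (Metric.closedBall_mem_nhds 0 one_pos) ?_
    intro e he
    exact subset_closure ⟨e, he, rfl⟩
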